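/- Let a, b, d, e > 0 and t₀ ∈ ℝ. Let X, Y : ℝ → ℝ be differentiable functions with X(t) ≥ 0 and Y(t) ≥ 0 for all t ≥ t₀, satisfying X'(t) + a X(t) ≤ b Y(t) and Y'(t) + d Y(t) ≤ e X(t) for all t ≥ t₀. Set α := min{ a, 2d − 2(b² + e²)/a }. Then for all t ≥ t₀, X(t)² + Y(t)² ≤ (X(t₀)² + Y(t₀)²) e^{−α (t − t₀)}. -/

import Mathlib

/-- Coupled differential inequality lemma encoding the fourth-power energy argument in the
finite Darcy–Prandtl number case: if `X' + aX ≤ bY` and `Y' + dY ≤ eX` on `[t₀, ∞)` with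
`X, Y ≥ 0` there, then with `α = min{a, 2d − 2(b² + e²)/a}` one has
`X(t)² + Y(t)² ≤ (X(t₀)² + Y(t₀)²) e^{−α(t − t₀)}` for all `t ≥ t₀`. -/
theorem coupled_gronwall (a b d e t₀ : ℝ)
    (ha : 0 < a) (hb : 0 < b) (hd : 0 < d) (he : 0 < e)
    (X Y : ℝ → ℝ) (hX : Differentiable ℝ X) (hY : Differentiable ℝ Y)
    (hX0 : ∀ t ≥ t₀, 0 ≤ X t) (hY0 : ∀ t ≥ t₀, 0 ≤ Y t)
    (hXineq : ∀ t ≥ t₀, deriv X t + a * X t ≤ b * Y t)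
    (hYineq : ∀ t ≥ t₀, deriv Y t + d * Y t ≤ e * X t) :
    ∀ t ≥ t₀, X t ^ 2 + Y t ^ 2 ≤ (X t₀ ^ 2 + Y t₀ ^ 2) *
      Real.exp (-(min a (2 * d - 2 * (b ^ 2 + e ^ 2) / a)) * (t - t₀)) := by
  set α := min a (2 * d - 2 * (b ^ 2 + e ^ 2) / a) with hαdef
  have hαa : α ≤ a := min_le_left _ _
  have hαd : a * α ≤ 2 * d * a - 2 * (b ^ 2 + e ^ 2) := by
    have h := min_le_right a (2 * d - 2 * (b ^ 2 + e ^ 2) / a)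
    have := mul_le_mul_of_nonneg_left h ha.le
    rw [mul_sub, mul_div_cancel₀ _ (ne_of_gt ha)] at this
    linarith
  set F : ℝ → ℝ := fun s => (X s ^ 2 + Y s ^ 2) * Real.exp (α * (s - t₀)) with hF
  have hFderiv : ∀ s : ℝ, HasDerivAt F
      ((2 * X s * deriv X s + 2 * Y s * deriv Y s + α * (X s ^ 2 + Y s ^ 2)) *
        Real.exp (α * (s - t₀))) s := by
    intro s
    have h1 : HasDerivAt (fun u => X u ^ 2 + Y u ^ 2)
        (2 * X s * deriv X s + 2 * Y s * deriv Y s) s := by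
      have : HasDerivAt (fun u => X u ^ 2 + Y u ^ 2) _ s := ((hX s).hasDerivAt.pow 2).add ((hY s).hasDerivAt.pow 2)
      convert this using 1
      ring
    have h2 : HasDerivAt (fun u => Real.exp (α * (u - t₀)))
        (α * Real.exp (α * (s - t₀))) s := by
      have hl : HasDerivAt (fun u : ℝ => α * (u - t₀)) α s := by
        simpa using ((hasDerivAt_id s).sub_const t₀).const_mul α
      simpa [mul_comm] using hl.exp
    have : HasDerivAt F _ s := h1.mul h2
    convert this using 1
    ring
  have key : ∀ s ∈ Set.Ioi t₀, deriv F s ≤ 0 := by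
    intro s hs
    have hs' : t₀ ≤ s := le_of_lt hs
    rw [(hFderiv s).deriv]
    have hexp : 0 < Real.exp (α * (s - t₀)) := Real.exp_pos _
    have hD : 2 * X s * deriv X s + 2 * Y s * deriv Y s + α * (X s ^ 2 + Y s ^ 2) ≤ 0 := by
      have hx0 := hX0 s hs'
      have hy0 := hY0 s hs'
      have hxi := hXineq s hs'
      have hyi := hYineq s hs'
      have h1 : X s * deriv X s ≤ X s * (b * Y s - a * X s) :=
        mul_le_mul_of_nonneg_left (by linarith) hx0
      have h2 : Y s * deriv Y s ≤ Y s * (e * X s - d * Y s) :=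
        mul_le_mul_of_nonneg_left (by linarith) hy0
      by_contra hcon
      push_neg at hcon
      have haD := mul_lt_mul_of_pos_left hcon ha
      nlinarith [sq_nonneg (a * X s - 2 * b * Y s), sq_nonneg (a * X s - 2 * e * Y s),
        mul_le_mul_of_nonneg_left h1 ha.le, mul_le_mul_of_nonneg_left h2 ha.le,
        mul_le_mul_of_nonneg_right hαd (sq_nonneg (Y s)),
        mul_le_mul_of_nonneg_right (mul_le_mul_of_nonneg_left hαa ha.le) (sq_nonneg (X s))]
    exact mul_nonpos_of_nonpos_of_nonneg hD hexp.le
  have hanti : AntitoneOn F (Set.Ici t₀) := by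
    apply antitoneOn_of_deriv_nonpos (convex_Ici t₀)
    · exact (Differentiable.continuous (fun s => (hFderiv s).differentiableAt)).continuousOn
    · exact fun s _ => ((hFderiv s).differentiableAt).differentiableWithinAt
    · rwa [interior_Ici]
  intro t ht
  have hFt := hanti (Set.self_mem_Ici) (Set.mem_Ici.mpr ht) ht
  have hFt₀ : F t₀ = X t₀ ^ 2 + Y t₀ ^ 2 := by simp [hF]
  have hFtval : F t = (X t ^ 2 + Y t ^ 2) * Real.exp (α * (t - t₀)) := rfl
  rw [hFt₀, hFtval] at hFt
  have hexp : 0 < Real.exp (α * (t - t₀)) := Real.exp_pos _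
  calc X t ^ 2 + Y t ^ 2
      = ((X t ^ 2 + Y t ^ 2) * Real.exp (α * (t - t₀))) * Real.exp (-α * (t - t₀)) := by
        rw [mul_assoc, ← Real.exp_add]; ring_nf; simp
    _ ≤ (X t₀ ^ 2 + Y t₀ ^ 2) * Real.exp (-α * (t - t₀)) := by
        apply mul_le_mul_of_nonneg_right hFt (Real.exp_pos _).le
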